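/- Let A be a commutative unital K-algebra, I an ideal, and * = Σ ν^r C_r a star product on A[[ν]] that is adapted to I up to order r, i.e. C_s(f,g) ∈ I for all f ∈ A, g ∈ I and 0 ≤ s ≤ r. For f ∈ A and g ∈ I write B_{r+1}(f,g) := C_{r+1}(f,g) mod I ∈ A/I, and B⁻_{r+1}(g_1,g_2) := B_{r+1}(g_1,g_2) − B_{r+1}(g_2,g_1) for g_1, g_2 ∈ I. Then for all f ∈ A and g, g_1, g_2, g_3 ∈ I: (i) (f mod I)·B_{r+1}(f_2,g) − B_{r+1}(f f_2, g) + B_{r+1}(f, f_2 g) = 0 for any f_2 ∈ A; (ii) B⁻_{r+1}(f g_1, g_2) = B⁻_{r+1}(g_1, f g_2) = (f mod I)·B⁻_{r+1}(g_1,g_2); (iii) B⁻_{r+1}(g_1 g_2, g_3) = 0. -/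

import Mathlib

open Finset PowerSeries

/-- A formal deformation (star product) of a commutative unital `K`-algebra `A`. -/
structure StarProd (K A : Type*) [Field K] [CommRing A] [Algebra K A] where
  C : ℕ → A →ₗ[K] A →ₗ[K] A
  C_zero : ∀ f g : A, C 0 f g = f * g
  C_one_left : ∀ r : ℕ, 0 < r → ∀ f : A, C r 1 f = 0
  C_one_right : ∀ r : ℕ, 0 < r → ∀ f : A, C r f 1 = 0
  assoc : ∀ (t : ℕ) (f g h : A),
    ∑ p ∈ Finset.HasAntidiagonal.antidiagonal t, C p.1 (C p.2 f g) h
      = ∑ p ∈ Finset.HasAntidiagonal.antidiagonal t, C p.1 f (C p.2 g h)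

namespace StarProd

variable {K A : Type*} [Field K] [CommRing A] [Algebra K A]

/-- The induced `K[[ν]]`-bilinear multiplication `f * g = ∑ ν^r C_r(f,g)` on `A[[ν]]`. -/
noncomputable def mul (D : StarProd K A) (f g : PowerSeries A) : PowerSeries A :=
  PowerSeries.mk fun t =>
    ∑ p ∈ Finset.HasAntidiagonal.antidiagonal t, ∑ q ∈ Finset.HasAntidiagonal.antidiagonal p.2,
      D.C p.1 (PowerSeries.coeff (R := A) q.1 f) (PowerSeries.coeff (R := A) q.2 g)

end StarProd

private lemma starprod_key {K A : Type*} [Field K] [CommRing A] [Algebra K A]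
    (D : StarProd K A) (I : Ideal A) (r : ℕ)
    (hadapt : ∀ s ≤ r, ∀ f g : A, g ∈ I → D.C s f g ∈ I)
    (f g h : A) (hh : h ∈ I) :
    Ideal.Quotient.mk I (D.C (r+1) (f * g) h)
      = Ideal.Quotient.mk I (D.C (r+1) f (g * h))
        + Ideal.Quotient.mk I f * Ideal.Quotient.mk I (D.C (r+1) g h) := by
  have hassoc := D.assoc (r+1) f g h
  have hmemL : ((r+1, 0) : ℕ × ℕ) ∈ Finset.HasAntidiagonal.antidiagonal (r+1) := by
    simp [Finset.mem_antidiagonal]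
  have hmemR : ((0, r+1) : ℕ × ℕ) ∈ Finset.HasAntidiagonal.antidiagonal (r+1) := by
    simp [Finset.mem_antidiagonal]
  have hL : Ideal.Quotient.mk I (∑ p ∈ Finset.HasAntidiagonal.antidiagonal (r+1), D.C p.1 (D.C p.2 f g) h)
      = Ideal.Quotient.mk I (D.C (r+1) (f * g) h) := by
    rw [map_sum, Finset.sum_eq_single_of_mem _ hmemL]
    · show Ideal.Quotient.mk I (D.C (r+1) (D.C 0 f g) h) = _
      rw [D.C_zero]
    · rintro ⟨a, b⟩ hp hne
      rw [Ideal.Quotient.eq_zero_iff_mem]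
      simp only [Finset.HasAntidiagonal.mem_antidiagonal] at hp
      simp only [ne_eq, Prod.mk.injEq, not_and] at hne
      exact hadapt a (by omega) _ _ hh
  have hR : Ideal.Quotient.mk I (∑ p ∈ Finset.HasAntidiagonal.antidiagonal (r+1), D.C p.1 f (D.C p.2 g h))
      = Ideal.Quotient.mk I f * Ideal.Quotient.mk I (D.C (r+1) g h)
        + Ideal.Quotient.mk I (D.C (r+1) f (g * h)) := by
    rw [map_sum, ← Finset.add_sum_erase _ _ hmemR]
    congr 1
    · rw [D.C_zero, map_mul]
    · have hmem' : ((r+1, 0) : ℕ × ℕ) ∈ (Finset.HasAntidiagonal.antidiagonal (r+1)).erase (0, r+1) := by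
        refine Finset.mem_erase.mpr ⟨by simp [Prod.ext_iff], hmemL⟩
      rw [Finset.sum_eq_single_of_mem _ hmem']
      · show Ideal.Quotient.mk I (D.C (r+1) f (D.C 0 g h)) = _
        rw [D.C_zero]
      · rintro ⟨a, b⟩ hp hne
        rw [Finset.mem_erase, Finset.HasAntidiagonal.mem_antidiagonal] at hp
        obtain ⟨hne', hab⟩ := hp
        rw [Ideal.Quotient.eq_zero_iff_mem]
        simp only [ne_eq, Prod.mk.injEq, not_and] at hne hne'
        have ha : a ≤ r := by omega
        have hb : b ≤ r := by omega
        exact hadapt a ha _ _ (hadapt b hb _ _ hh)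
  rw [← hL, hassoc, hR]; ring

private lemma starprod_key2 {K A : Type*} [Field K] [CommRing A] [Algebra K A]
    (D : StarProd K A) (I : Ideal A) (r : ℕ)
    (hadapt : ∀ s ≤ r, ∀ f g : A, g ∈ I → D.C s f g ∈ I)
    (f g h : A) (hg : g ∈ I) (hh : h ∈ I) :
    Ideal.Quotient.mk I (D.C (r+1) (f * g) h)
      = Ideal.Quotient.mk I (D.C (r+1) g (f * h)) := by
  have := starprod_key D I r hadapt g f h hh
  rw [mul_comm g f] at this
  rw [this, Ideal.Quotient.eq_zero_iff_mem.mpr hg]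
  ring

/-- First-obstruction identities: let `* = Σ ν^s C_s` be a star product on `A[[ν]]`
adapted to the ideal `I` up to order `r` (`C_s(A,I) ⊆ I` for `s ≤ r`). Writing
`B(f,g) = C_{r+1}(f,g) mod I ∈ A/I` and `B⁻(g₁,g₂) = B(g₁,g₂) − B(g₂,g₁)`, then for all
`f, f₂ ∈ A` and `g, g₁, g₂, g₃ ∈ I`:
(i)  `(f mod I)·B(f₂,g) − B(f·f₂,g) + B(f,f₂·g) = 0`;
(ii) `B⁻(f·g₁,g₂) = B⁻(g₁,f·g₂) = (f mod I)·B⁻(g₁,g₂)`;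
(iii) `B⁻(g₁·g₂,g₃) = 0`. -/
theorem statement14 {K A : Type*} [Field K] [CharZero K] [CommRing A] [Algebra K A]
    (D : StarProd K A) (I : Ideal A) (r : ℕ)
    (hadapt : ∀ s ≤ r, ∀ f g : A, g ∈ I → D.C s f g ∈ I) :
    (∀ f f₂ g : A, g ∈ I →
      Ideal.Quotient.mk I f * Ideal.Quotient.mk I (D.C (r+1) f₂ g)
        - Ideal.Quotient.mk I (D.C (r+1) (f * f₂) g)
        + Ideal.Quotient.mk I (D.C (r+1) f (f₂ * g)) = 0) ∧
    (∀ f g₁ g₂ : A, g₁ ∈ I → g₂ ∈ I →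
      (Ideal.Quotient.mk I (D.C (r+1) (f * g₁) g₂) - Ideal.Quotient.mk I (D.C (r+1) g₂ (f * g₁))
          = Ideal.Quotient.mk I (D.C (r+1) g₁ (f * g₂))
            - Ideal.Quotient.mk I (D.C (r+1) (f * g₂) g₁)) ∧
      (Ideal.Quotient.mk I (D.C (r+1) g₁ (f * g₂)) - Ideal.Quotient.mk I (D.C (r+1) (f * g₂) g₁)
          = Ideal.Quotient.mk I f *
            (Ideal.Quotient.mk I (D.C (r+1) g₁ g₂) - Ideal.Quotient.mk I (D.C (r+1) g₂ g₁)))) ∧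
    (∀ g₁ g₂ g₃ : A, g₁ ∈ I → g₂ ∈ I → g₃ ∈ I →
      Ideal.Quotient.mk I (D.C (r+1) (g₁ * g₂) g₃)
        - Ideal.Quotient.mk I (D.C (r+1) g₃ (g₁ * g₂)) = 0) := by
  refine ⟨fun f f₂ g hg => ?_, fun f g₁ g₂ hg₁ hg₂ => ?_, fun g₁ g₂ g₃ hg₁ hg₂ hg₃ => ?_⟩
  · rw [starprod_key D I r hadapt f f₂ g hg]; ring
  · constructor
    · rw [starprod_key2 D I r hadapt f g₁ g₂ hg₁ hg₂,
        starprod_key2 D I r hadapt f g₂ g₁ hg₂ hg₁]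
    · have h1 : Ideal.Quotient.mk I (D.C (r+1) g₁ (f * g₂))
          = Ideal.Quotient.mk I (D.C (r+1) f (g₁ * g₂))
            + Ideal.Quotient.mk I f * Ideal.Quotient.mk I (D.C (r+1) g₁ g₂) := by
        rw [← starprod_key2 D I r hadapt f g₁ g₂ hg₁ hg₂,
          starprod_key D I r hadapt f g₁ g₂ hg₂]
      have h2 := starprod_key D I r hadapt f g₂ g₁ hg₁
      rw [h1, h2, mul_comm g₁ g₂]; ring
  · have h1 : Ideal.Quotient.mk I (D.C (r+1) (g₂ * g₁) g₃)
        = Ideal.Quotient.mk I (D.C (r+1) g₁ (g₂ * g₃)) :=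
      starprod_key2 D I r hadapt g₂ g₁ g₃ hg₁ hg₃
    have h2 : Ideal.Quotient.mk I (D.C (r+1) (g₃ * g₁) g₂)
        = Ideal.Quotient.mk I (D.C (r+1) g₁ (g₃ * g₂)) :=
      starprod_key2 D I r hadapt g₃ g₁ g₂ hg₁ hg₂
    have h3 : Ideal.Quotient.mk I (D.C (r+1) (g₁ * g₃) g₂)
        = Ideal.Quotient.mk I (D.C (r+1) g₃ (g₁ * g₂)) :=
      starprod_key2 D I r hadapt g₁ g₃ g₂ hg₃ hg₂
    rw [← h3, mul_comm g₁ g₃, h2, mul_comm g₁ g₂, h1, mul_comm g₂ g₃, sub_self]
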